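/- Fix K, M ≥ 1, channel vectors h_k ∈ ℂ^M for k ∈ {1,…,K}, and σ² > 0. For precoders w_1,…,w_K ∈ ℂ^M write z_{k,i} := Σ_{j=1}^M (h_k)_j·(w_i)_j. Suppose that for each k there are ŵ_k ∈ ℂ^M with ẑ_k := Σ_j (h_k)_j·(ŵ_k)_j, and reals u_k, û_k, η̄_k with û_k > 0 and u_k ≥ η̄_k > 0, such that Σ_{i≠k} |z_{k,i}|² + σ² ≤ (2/û_k)·Re(conj(ẑ_k)·z_{k,k}) − (u_k/û_k²)·|ẑ_k|². Then for every k, |z_{k,k}|² ≥ u_k·(Σ_{i≠k} |z_{k,i}|² + σ²); in particular the SINR of user k satisfies |z_{k,k}|²/(Σ_{i≠k} |z_{k,i}|² + σ²) ≥ u_k ≥ η̄_k, i.e., every feasible point of the approximated problem P3 satisfies the original QoS (SINR) constraints. -/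

import Mathlib

/-- Every feasible point of the approximated problem P3 satisfies the original QoS (SINR)
constraints: if the linearized constraint (eq:OP2 c1 app) holds for each user `k`, then
`|z_{k,k}|² ≥ u_k·(Σ_{i≠k}|z_{k,i}|² + σ²)`, and hence the SINR of user `k` is at least
`u_k ≥ η̄_k`. -/
theorem approx_feasible_implies_qos
    {K M : ℕ} (hK : 1 ≤ K) (hM : 1 ≤ M)
    (h : Fin K → Fin M → ℂ) (σ2 : ℝ) (hσ2 : 0 < σ2)
    (w what : Fin K → Fin M → ℂ) (u uhat ηbar : Fin K → ℝ)
    (huhat : ∀ k, 0 < uhat k) (hηbar : ∀ k, 0 < ηbar k) (huη : ∀ k, ηbar k ≤ u k)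
    (z : Fin K → Fin K → ℂ) (hz : ∀ k i, z k i = ∑ j, h k j * w i j)
    (zhat : Fin K → ℂ) (hzhat : ∀ k, zhat k = ∑ j, h k j * what k j)
    (hcon : ∀ k, ∑ i ∈ Finset.univ.erase k, ‖z k i‖ ^ 2 + σ2
        ≤ (2 / uhat k) * ((starRingEnd ℂ) (zhat k) * z k k).re
          - (u k / uhat k ^ 2) * ‖zhat k‖ ^ 2) :
    ∀ k, u k * (∑ i ∈ Finset.univ.erase k, ‖z k i‖ ^ 2 + σ2)
          ≤ ‖z k k‖ ^ 2 ∧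
        ηbar k ≤ u k ∧
        u k ≤ ‖z k k‖ ^ 2 /
          (∑ i ∈ Finset.univ.erase k, ‖z k i‖ ^ 2 + σ2) := by
  intro k
  have hu : 0 < u k := lt_of_lt_of_le (hηbar k) (huη k)
  have hI : 0 ≤ ∑ i ∈ Finset.univ.erase k, ‖z k i‖ ^ 2 :=
    Finset.sum_nonneg fun i _ => sq_nonneg _
  have hD : 0 < ∑ i ∈ Finset.univ.erase k, ‖z k i‖ ^ 2 + σ2 := by linarith
  set D := ∑ i ∈ Finset.univ.erase k, ‖z k i‖ ^ 2 + σ2 with hDdef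
  have hR : ((starRingEnd ℂ) (zhat k) * z k k).re ≤ ‖zhat k‖ * ‖z k k‖ := by
    calc ((starRingEnd ℂ) (zhat k) * z k k).re
        ≤ ‖(starRingEnd ℂ) (zhat k) * z k k‖ := Complex.re_le_norm _
      _ = ‖zhat k‖ * ‖z k k‖ := by
          rw [norm_mul, Complex.norm_conj]
  have hA : 0 ≤ ‖zhat k‖ := norm_nonneg _
  have hB : 0 ≤ ‖z k k‖ := norm_nonneg _
  have huh2 := huhat k
  have hc := hcon k
  have hne : uhat k ≠ 0 := ne_of_gt huh2
  have hc' : uhat k ^ 2 * D ≤ 2 * uhat k * ((starRingEnd ℂ) (zhat k) * z k k).re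
      - u k * ‖zhat k‖ ^ 2 := by
    have h2 := mul_le_mul_of_nonneg_left hc (sq_nonneg (uhat k))
    calc uhat k ^ 2 * D ≤ uhat k ^ 2 * (2 / uhat k * ((starRingEnd ℂ) (zhat k) * z k k).re
          - u k / uhat k ^ 2 * ‖zhat k‖ ^ 2) := h2
      _ = 2 * uhat k * ((starRingEnd ℂ) (zhat k) * z k k).re
          - u k * ‖zhat k‖ ^ 2 := by field_simp
  have key : u k * D ≤ ‖z k k‖ ^ 2 := by
    nlinarith [sq_nonneg (uhat k * ‖z k k‖ - u k * ‖zhat k‖),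
      mul_le_mul_of_nonneg_left hc' hu.le, mul_pos huh2 huh2,
      mul_le_mul_of_nonneg_left hR (by positivity : (0:ℝ) ≤ 2 * uhat k * u k)]
  refine ⟨key, huη k, ?_⟩
  rw [le_div_iff₀ hD]
  exact key
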